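/- Let b be a weighted graph over V with values in an ordered field, U ⊆ V, π = π_U^b, and x, y ∈ U with x → y with respect to π. Then y → x if and only if b(x) ≃ b(y). -/

import Mathlib

open Classical
open scoped ENNReal

namespace NAG

/-- The real part of an at most finite element of an ordered field:
the supremum of the rationals below it. -/
noncomputable def rp {K : Type*} [Field K] [LinearOrder K] [IsStrictOrderedRing K] (k : K) : ℝ :=
  sSup {r : ℝ | ∃ q : ℚ, r = (q : ℝ) ∧ (q : K) ≤ k}

/-- `k₁ ≃ k₂` : the quotient is bounded above and below by positive rationals. -/
def Comparable {K : Type*} [Field K] [LinearOrder K] [IsStrictOrderedRing K] (k₁ k₂ : K) : Prop :=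
  ∃ c₁ c₂ : ℚ, 0 < c₁ ∧ 0 < c₂ ∧ (c₁ : K) < k₁ / k₂ ∧ k₁ / k₂ < (c₂ : K)

/-- `k₁ ≺≺ k₂` : the quotient is smaller than every positive rational. -/
def MuchLT {K : Type*} [Field K] [LinearOrder K] [IsStrictOrderedRing K] (k₁ k₂ : K) : Prop :=
  ∀ c : ℚ, 0 < c → k₁ / k₂ < (c : K)

/-- `k₁ ≾ k₂` : the quotient is bounded above by some positive rational. -/
def LessSim {K : Type*} [Field K] [LinearOrder K] [IsStrictOrderedRing K] (k₁ k₂ : K) : Prop :=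
  ∃ c : ℚ, 0 < c ∧ k₁ / k₂ < (c : K)

/-- A (locally finite) weighted graph over `V` with values in an ordered field `K`. -/
structure Graph (V K : Type*) [Field K] [LinearOrder K] [IsStrictOrderedRing K] where
  w : V → V → K
  symm : ∀ x y, w x y = w y x
  nonneg : ∀ x y, 0 ≤ w x y
  loopless : ∀ x, w x x = 0
  locFin : ∀ x, {y | w x y ≠ 0}.Finite

variable {V K : Type*} [Field K] [LinearOrder K] [IsStrictOrderedRing K]

/-- `b(x) = Σ_y b(x,y)`. -/
noncomputable def Graph.deg (G : Graph V K) (x : V) : K := ∑ᶠ y, G.w x y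

def Graph.Adj (G : Graph V K) (x y : V) : Prop := 0 < G.w x y

def Graph.Connected (G : Graph V K) : Prop :=
  ∀ x y : V, ∃ (n : ℕ) (p : ℕ → V), p 0 = x ∧ p n = y ∧ ∀ i < n, G.Adj (p i) (p (i + 1))

def Graph.ConnectedOn (G : Graph V K) (S : Set V) : Prop :=
  ∀ x ∈ S, ∀ y ∈ S, ∃ (n : ℕ) (p : ℕ → V),
    p 0 = x ∧ p n = y ∧ (∀ i ≤ n, p i ∈ S) ∧ ∀ i < n, G.Adj (p i) (p (i + 1))

/-- normalized weight `p(x,y) = b(x,y)/b(x)`. -/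
noncomputable def Graph.p (G : Graph V K) (x y : V) : K := G.w x y / G.deg x

/-- The real transition matrix `π_U^b`. -/
noncomputable def Graph.pi (G : Graph V K) (U : Set V) (x y : V) : ℝ :=
  if x ∈ U then rp (G.p x y) else if x = y then 1 else 0

/-- A directed path of length `n` from `x` to `y` for a real kernel `m`. -/
def DirPath {V : Type*} (m : V → V → ℝ) (x y : V) (n : ℕ) (p : ℕ → V) : Prop :=
  p 0 = x ∧ p n = y ∧ ∀ i < n, 0 < m (p i) (p (i + 1))

/-- `x → y` : reachability by directed paths. -/
def Reaches {V : Type*} (m : V → V → ℝ) (x y : V) : Prop :=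
  x = y ∨ ∃ n p, DirPath m x y n p

/-- `x ↔ y` : mutual reachability (same strongly connected component). -/
def SameSCC {V : Type*} (m : V → V → ℝ) (x y : V) : Prop :=
  Reaches m x y ∧ Reaches m y x

section Proofs

variable {V K : Type*} [Field K] [LinearOrder K] [IsStrictOrderedRing K]

lemma Graph.w_le_deg (G : Graph V K) (u v : V) : G.w u v ≤ G.deg u := by
  refine single_le_finsum v ?_ (G.nonneg u)
  exact (G.locFin u).subset (fun y hy => hy)

lemma rp_pos_of {k : K} {q : ℚ} (hq : 0 < q) (hqk : (q : K) ≤ k) (hk : k ≤ 1) :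
    0 < rp k := by
  have hmem : (q : ℝ) ∈ {r : ℝ | ∃ q' : ℚ, r = (q' : ℝ) ∧ (q' : K) ≤ k} := ⟨q, rfl, hqk⟩
  have hbdd : BddAbove {r : ℝ | ∃ q' : ℚ, r = (q' : ℝ) ∧ (q' : K) ≤ k} := by
    refine ⟨1, fun r hr => ?_⟩
    obtain ⟨q', rfl, hq'⟩ := hr
    have : (q' : K) ≤ 1 := hq'.trans hk
    have hq1 : (q' : ℚ) ≤ 1 := by exact_mod_cast this
    exact_mod_cast hq1
  have : (q : ℝ) ≤ rp k := le_csSup hbdd hmem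
  have hq' : (0 : ℝ) < (q : ℝ) := by exact_mod_cast hq
  exact lt_of_lt_of_le hq' this

lemma exists_rat_of_rp_pos {k : K} (h : 0 < rp k) : ∃ q : ℚ, 0 < q ∧ (q : K) ≤ k := by
  by_contra hcon
  push_neg at hcon
  have : rp k ≤ 0 := by
    apply Real.sSup_nonpos
    rintro r ⟨q, rfl, hq⟩
    by_contra hr
    push_neg at hr
    have hq0 : 0 < q := by exact_mod_cast hr
    exact absurd hq (not_le.mpr (hcon q hq0))
  exact absurd this (not_le.mpr h)

/-- Characterization of positive transition, for `u ∈ U`. -/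
lemma pi_pos_iff (G : Graph V K) (hdeg : ∀ x, 0 < G.deg x) {U : Set V} {u v : V}
    (hu : u ∈ U) : 0 < G.pi U u v ↔ ∃ q : ℚ, 0 < q ∧ (q : K) * G.deg u ≤ G.w u v := by
  unfold Graph.pi
  rw [if_pos hu]
  constructor
  · intro h
    obtain ⟨q, hq, hqk⟩ := exists_rat_of_rp_pos h
    refine ⟨q, hq, ?_⟩
    rw [Graph.p, le_div_iff₀ (hdeg u)] at hqk
    linarith
  · rintro ⟨q, hq, hqk⟩
    apply rp_pos_of hq
    · rw [Graph.p, le_div_iff₀ (hdeg u)]; linarith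
    · rw [Graph.p, div_le_one (hdeg u)]; exact G.w_le_deg u v

lemma lessSim_refl {k : K} (hk : 0 < k) : LessSim k k :=
  ⟨2, by norm_num, by rw [div_self hk.ne']; exact_mod_cast one_lt_two⟩

lemma lessSim_trans {a b c : K} (hb : 0 < b) (hc : 0 < c)
    (h₁ : LessSim a b) (h₂ : LessSim b c) : LessSim a c := by
  obtain ⟨d₁, hd₁, h₁⟩ := h₁
  obtain ⟨d₂, hd₂, h₂⟩ := h₂
  refine ⟨d₁ * d₂, mul_pos hd₁ hd₂, ?_⟩
  rw [div_lt_iff₀ hb] at h₁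
  rw [div_lt_iff₀ hc] at h₂
  rw [div_lt_iff₀ hc]
  push_cast
  nlinarith [hc.le, (show (0:K) < (d₁ : K) by exact_mod_cast hd₁)]

lemma edge_lessSim (G : Graph V K) (hdeg : ∀ x, 0 < G.deg x) {U : Set V} {u v : V}
    (hu : u ∈ U) (h : 0 < G.pi U u v) : LessSim (G.deg u) (G.deg v) := by
  obtain ⟨q, hq, hqk⟩ := (pi_pos_iff G hdeg hu).mp h
  have hwv : G.w u v ≤ G.deg v := by rw [G.symm]; exact G.w_le_deg v u
  refine ⟨1 / q + 1, by positivity, ?_⟩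
  rw [div_lt_iff₀ (hdeg v)]
  have hq' : (0 : K) < (q : K) := by exact_mod_cast hq
  have h1 : (q : K) * G.deg u ≤ G.deg v := hqk.trans hwv
  have : G.deg u ≤ (1 / q : K) * G.deg v := by
    rw [div_mul_eq_mul_div, one_mul, le_div_iff₀ hq']
    linarith [h1, mul_comm (G.deg u) ((q:K))]
  push_cast
  nlinarith [hdeg v]

lemma edge_rev (G : Graph V K) (hdeg : ∀ x, 0 < G.deg x) {U : Set V} {u v : V}
    (hu : u ∈ U) (hv : v ∈ U) (h : 0 < G.pi U u v)
    (hls : LessSim (G.deg v) (G.deg u)) : 0 < G.pi U v u := by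
  obtain ⟨q, hq, hqk⟩ := (pi_pos_iff G hdeg hu).mp h
  obtain ⟨c, hc, hcl⟩ := hls
  rw [div_lt_iff₀ (hdeg u)] at hcl
  refine (pi_pos_iff G hdeg hv).mpr ⟨q / c, by positivity, ?_⟩
  have hc' : (0 : K) < (c : K) := by exact_mod_cast hc
  have hq' : (0 : K) < (q : K) := by exact_mod_cast hq
  rw [G.symm v u]
  have : ((q / c : ℚ) : K) * G.deg v ≤ (q : K) * G.deg u := by
    push_cast
    rw [div_mul_eq_mul_div, div_le_iff₀ hc']
    nlinarith
  linarith

/-- If `a ∉ U`, a directed path starting at `a` stays at `a`. -/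
lemma path_stall (G : Graph V K) {U : Set V} :
    ∀ (n : ℕ) (p : ℕ → V) (a b : V), DirPath (G.pi U) a b n p → a ∉ U → b = a := by
  intro n
  induction n with
  | zero => rintro p a b ⟨h0, h1, _⟩ _; rw [← h1, h0]
  | succ n ih =>
    rintro p a b ⟨h0, h1, he⟩ ha
    have h01 := he 0 (Nat.succ_pos n)
    rw [h0] at h01
    unfold Graph.pi at h01
    rw [if_neg ha] at h01
    have hap1 : a = p 1 := by
      by_contra hne
      rw [if_neg hne] at h01
      exact lt_irrefl 0 h01
    have : DirPath (G.pi U) a b n (fun i => p (i + 1)) := by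
      refine ⟨hap1.symm, h1, fun i hi => he (i + 1) (Nat.succ_lt_succ hi)⟩
    exact ih _ a b this ha

/-- Along any directed path the degree cannot decrease by more than a rational factor. -/
lemma path_lessSim (G : Graph V K) (hdeg : ∀ x, 0 < G.deg x) {U : Set V} :
    ∀ (n : ℕ) (p : ℕ → V) (a b : V), DirPath (G.pi U) a b n p →
      LessSim (G.deg a) (G.deg b) := by
  intro n
  induction n with
  | zero => rintro p a b ⟨h0, h1, _⟩; rw [← h1, h0]; exact lessSim_refl (hdeg a)
  | succ n ih =>
    rintro p a b ⟨h0, h1, he⟩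
    have hpath : DirPath (G.pi U) (p 1) b n (fun i => p (i + 1)) :=
      ⟨rfl, h1, fun i hi => he (i + 1) (Nat.succ_lt_succ hi)⟩
    have h01 := he 0 (Nat.succ_pos n)
    rw [h0] at h01
    by_cases ha : a ∈ U
    · exact lessSim_trans (hdeg (p 1)) (hdeg b)
        (edge_lessSim G hdeg ha h01) (ih _ (p 1) b hpath)
    · unfold Graph.pi at h01
      rw [if_neg ha] at h01
      have hap1 : a = p 1 := by
        by_contra hne
        rw [if_neg hne] at h01
        exact lt_irrefl 0 h01
      rw [hap1]
      exact ih _ (p 1) b hpath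

lemma reaches_step {m : V → V → ℝ} {a b c : V} (h : Reaches m a b) (hbc : 0 < m b c) :
    Reaches m a c := by
  rcases h with rfl | ⟨n, p, h0, h1, he⟩
  · refine Or.inr ⟨1, fun i => if i = 0 then a else c, by simp, by simp, ?_⟩
    intro i hi
    interval_cases i
    simpa using hbc
  · refine Or.inr ⟨n + 1, fun i => if i ≤ n then p i else c, by simp [h0], by simp, ?_⟩
    intro i hi
    rcases lt_or_eq_of_le (Nat.lt_succ_iff.mp hi) with hlt | rfl
    · have : i ≤ n := hlt.le
      have h2 : i + 1 ≤ n := hlt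
      simp only [if_pos this, if_pos h2]
      exact he i hlt
    · simp only [le_refl, if_pos, Nat.succ_le_iff, lt_irrefl, if_neg (by omega : ¬ i + 1 ≤ i)]
      rw [h1]
      exact hbc

/-- Key induction: reversing a path when the endpoint degrees are comparable. -/
lemma path_rev (G : Graph V K) (hdeg : ∀ x, 0 < G.deg x) {U : Set V} :
    ∀ (n : ℕ) (p : ℕ → V) (a b : V), DirPath (G.pi U) a b n p → b ∈ U →
      LessSim (G.deg b) (G.deg a) → Reaches (G.pi U) b a := by
  intro n
  induction n with
  | zero => rintro p a b ⟨h0, h1, _⟩ _ _; exact Or.inl (by rw [← h1, h0])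
  | succ n ih =>
    rintro p a b ⟨h0, h1, he⟩ hb hba
    have hpath : DirPath (G.pi U) (p 1) b n (fun i => p (i + 1)) :=
      ⟨rfl, h1, fun i hi => he (i + 1) (Nat.succ_lt_succ hi)⟩
    have h01 := he 0 (Nat.succ_pos n)
    rw [h0] at h01
    by_cases ha : a ∈ U
    · have hc : p 1 ∈ U := by
        by_contra hcn
        exact hcn (path_stall G n _ (p 1) b hpath hcn ▸ hb)
      have h_a_c : LessSim (G.deg a) (G.deg (p 1)) := edge_lessSim G hdeg ha h01
      have h_c_b : LessSim (G.deg (p 1)) (G.deg b) := path_lessSim G hdeg n _ (p 1) b hpath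
      have h_c_a : LessSim (G.deg (p 1)) (G.deg a) :=
        lessSim_trans (hdeg b) (hdeg a) h_c_b hba
      have h_b_c : LessSim (G.deg b) (G.deg (p 1)) :=
        lessSim_trans (hdeg a) (hdeg (p 1)) hba h_a_c
      have hrev : 0 < G.pi U (p 1) a := edge_rev G hdeg ha hc h01 h_c_a
      exact reaches_step (ih _ (p 1) b hpath hb h_b_c) hrev
    · unfold Graph.pi at h01
      rw [if_neg ha] at h01
      have hap1 : a = p 1 := by
        by_contra hne
        rw [if_neg hne] at h01
        exact lt_irrefl 0 h01
      rw [hap1]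
      rw [hap1] at hba
      exact ih _ (p 1) b hpath hb hba

end Proofs

/-- for `x, y ∈ U` with `x → y`, one has `y → x` iff `b(x) ≃ b(y)`. -/
theorem reaches_back_iff {V K : Type*} [Field K] [LinearOrder K] [IsStrictOrderedRing K] [Countable V]
    (G : Graph V K) (hconn : G.Connected) (hdeg : ∀ x, 0 < G.deg x)
    (U : Set V) (x y : V) (hx : x ∈ U) (hy : y ∈ U)
    (hxy : Reaches (G.pi U) x y) :
    Reaches (G.pi U) y x ↔ Comparable (G.deg x) (G.deg y) := by
  constructor
  · intro hyx
    have h1 : LessSim (G.deg x) (G.deg y) := by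
      rcases hxy with rfl | ⟨n, p, hp⟩
      · exact lessSim_refl (hdeg x)
      · exact path_lessSim G hdeg n p x y hp
    have h2 : LessSim (G.deg y) (G.deg x) := by
      rcases hyx with rfl | ⟨n, p, hp⟩
      · exact lessSim_refl (hdeg y)
      · exact path_lessSim G hdeg n p y x hp
    obtain ⟨c₂, hc₂, h₂⟩ := h1
    obtain ⟨c, hc, h₁⟩ := h2
    refine ⟨1 / c, c₂, by positivity, hc₂, ?_, h₂⟩
    have hc' : (0 : K) < (c : K) := by exact_mod_cast hc
    rw [div_lt_iff₀ (hdeg x)] at h₁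
    rw [lt_div_iff₀ (hdeg y)]
    push_cast
    rw [div_mul_eq_mul_div, one_mul, div_lt_iff₀ hc']
    linarith
  · intro hcomp
    obtain ⟨c₁, c₂, hc₁, hc₂, hl, hr⟩ := hcomp
    have hc₁' : (0 : K) < (c₁ : K) := by exact_mod_cast hc₁
    have hyx : LessSim (G.deg y) (G.deg x) := by
      refine ⟨1 / c₁, by positivity, ?_⟩
      rw [lt_div_iff₀ (hdeg y)] at hl
      rw [div_lt_iff₀ (hdeg x)]
      push_cast
      rw [div_mul_eq_mul_div, one_mul, lt_div_iff₀ hc₁']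
      linarith
    rcases hxy with rfl | ⟨n, p, hp⟩
    · exact Or.inl rfl
    · exact path_rev G hdeg n p x y hp hy hyx

end NAG
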